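/- arXiv:1911.04727 — 2 statements merged into one kernel-verified Lean document; each statement's English description precedes it below -/
import Mathlib

section
/- Let ς be a d-inflator on K. Then: (1) the fundamental ring R_ς is a K₀-subalgebra of K; (2) each α ∈ R_ς specializes to a unique φ ∈ End_R(M), and the resulting generalized residue map res : R_ς → End_R(M) is a ring homomorphism which is K₀-linear and sends each q ∈ K₀ to q·id_M; (3) the fundamental ideal I_ς is the kernel of res, hence an ideal of R_ς; (4) I_ς is contained in the Jacobson radical of R_ς; in particular every element of 1 + I_ς is a unit of R_ς. -/
/-- The length of a module, as the Krull dimension of its submodule lattice. -/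
noncomputable def moduleLength (R M : Type*) [Ring R] [AddCommGroup M] [Module R M] :
    WithBot ℕ∞ :=
  Order.krullDim (Submodule R M)

/-- The "direct sum" of a submodule of `Fin n → N` and a submodule of `Fin m → N`,
as a submodule of `Fin (n+m) → N`, under the standard identification. -/
def Submodule.finDSum {S N : Type*} [Ring S] [AddCommGroup N] [Module S N] {n m : ℕ}
    (V : Submodule S (Fin n → N)) (W : Submodule S (Fin m → N)) :
    Submodule S (Fin (n + m) → N) where
  carrier := {x | (fun i => x (Fin.castAdd m i)) ∈ V ∧ (fun j => x (Fin.natAdd n j)) ∈ W}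
  add_mem' := by
    rintro x y ⟨hx1, hx2⟩ ⟨hy1, hy2⟩
    exact ⟨V.add_mem hx1 hy1, W.add_mem hx2 hy2⟩
  zero_mem' := ⟨V.zero_mem, W.zero_mem⟩
  smul_mem' := by
    rintro c x ⟨hx1, hx2⟩
    exact ⟨V.smul_mem c hx1, W.smul_mem c hx2⟩

/-- The coordinatewise action of a `K₀`-matrix on `Fin m → N`, where `N` carries commuting
`K₀`- and `S`-actions, as an `S`-linear map. -/
def matVec {K₀ S N : Type*} [CommRing K₀] [Ring S] [AddCommGroup N] [Module S N]
    [Module K₀ N] [SMulCommClass K₀ S N] {n m : ℕ}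
    (μ : Matrix (Fin n) (Fin m) K₀) : (Fin m → N) →ₗ[S] (Fin n → N) where
  toFun x := fun i => ∑ j, μ i j • x j
  map_add' x y := by
    funext i
    simp [smul_add, Finset.sum_add_distrib]
  map_smul' c x := by
    funext i
    simp only [Pi.smul_apply, RingHom.id_apply, Finset.smul_sum]
    exact Finset.sum_congr rfl fun j _ => smul_comm _ _ _

/-- The graph `{(x, a·x) : x ∈ K}` as a `K`-subspace of `K² = Fin 2 → K`. -/
def graphK (K : Type*) [Field K] (a : K) : Submodule K (Fin 2 → K) where
  carrier := {v | v 1 = a * v 0}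
  add_mem' := by
    intro x y hx hy
    simp only [Set.mem_setOf_eq, Pi.add_apply] at *
    rw [hx, hy]; ring
  zero_mem' := by simp
  smul_mem' := by
    intro c x hx
    simp only [Set.mem_setOf_eq, Pi.smul_apply, smul_eq_mul] at *
    rw [hx]; ring

/-- The graph `{(u, φ(u)) : u ∈ M}` of an endomorphism, as an `R`-submodule of `M²`. -/
def graphM {R M : Type*} [Ring R] [AddCommGroup M] [Module R M] (φ : Module.End R M) :
    Submodule R (Fin 2 → M) where
  carrier := {v | v 1 = φ (v 0)}
  add_mem' := by
    intro x y hx hy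
    simp only [Set.mem_setOf_eq, Pi.add_apply] at *
    rw [hx, hy, map_add]
  zero_mem' := by simp
  smul_mem' := by
    intro c x hx
    simp only [Set.mem_setOf_eq, Pi.smul_apply] at *
    rw [hx, map_smul]

/-- A `d`-inflator on `K`, with target the pair `(R, M)`. -/
structure Inflator (K₀ K R M : Type*) [Field K₀] [Field K] [Algebra K₀ K]
    [Ring R] [Algebra K₀ R] [AddCommGroup M] [Module R M] [Module K₀ M]
    [SMulCommClass K₀ R M] (d : ℕ) where
  ς : ∀ n : ℕ, Submodule K (Fin n → K) → Submodule R (Fin n → M)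
  mono : ∀ (n : ℕ) (V W : Submodule K (Fin n → K)), V ≤ W → ς n V ≤ ς n W
  map_dsum : ∀ (n m : ℕ) (V : Submodule K (Fin n → K)) (W : Submodule K (Fin m → K)),
    ς (n + m) (V.finDSum W) = (ς n V).finDSum (ς m W)
  equivariant : ∀ (n : ℕ) (μ : Matrix (Fin n) (Fin n) K₀), IsUnit μ →
    ∀ V : Submodule K (Fin n → K),
      ς n (V.map (matVec (S := K) (N := K) μ)) = (ς n V).map (matVec (S := R) (N := M) μ)
  length_eq : ∀ (n : ℕ) (V : Submodule K (Fin n → K)),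
    moduleLength R (ς n V) = ((d * Module.finrank K V : ℕ) : ℕ∞)

namespace Inflator

variable {K₀ K R M : Type*} [Field K₀] [Field K] [Algebra K₀ K]
    [Ring R] [Algebra K₀ R] [AddCommGroup M] [Module R M] [Module K₀ M]
    [SMulCommClass K₀ R M] {d : ℕ}

/-- `a ∈ K` specializes to the endomorphism `φ` of `M`. -/
def Specializes (I : Inflator K₀ K R M d) (a : K) (φ : Module.End R M) : Prop :=
  I.ς 2 (graphK K a) = graphM φ

/-- The fundamental ring of an inflator, as a subset of `K`. -/
def fundSet (I : Inflator K₀ K R M d) : Set K :=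
  {a | ∃ φ : Module.End R M, I.Specializes a φ}

/-- The fundamental ideal of an inflator, as a subset of `K`. -/
def fundIdealSet (I : Inflator K₀ K R M d) : Set K :=
  {a | I.Specializes a 0}

end Inflator



open Order

section OrderLemmas
variable {α : Type*} [Preorder α]

lemma krullDim_Iic (a : α) : krullDim ↥(Set.Iic a) = (height a : WithBot ℕ∞) := by
  have : Nonempty ↥(Set.Iic a) := ⟨⟨a, le_refl a⟩⟩
  rw [krullDim_eq_iSup_length, WithBot.coe_inj]
  apply le_antisymm
  · apply iSup_le
    intro p
    have := length_le_height (p := p.map Subtype.val (fun _ _ h => h))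
      (x := a) (p.last.2)
    exact this
  · apply height_le
    intro p hp
    let q : LTSeries ↥(Set.Iic a) :=
      ⟨p.length, fun i => ⟨p i, hp ▸ p.monotone (Fin.le_last i)⟩, p.step⟩
    exact le_iSup_of_le q le_rfl

end OrderLemmas

section ModLen
variable {R M M' : Type*} [Ring R] [AddCommGroup M] [Module R M]
  [AddCommGroup M'] [Module R M']

lemma moduleLength_congr (e : M ≃ₗ[R] M') : moduleLength R M = moduleLength R M' :=
  krullDim_eq_of_orderIso (Submodule.orderIsoMapComap e)

lemma moduleLength_submodule (N : Submodule R M) :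
    moduleLength R ↥N = (height N : WithBot ℕ∞) := by
  rw [← krullDim_Iic]
  refine krullDim_eq_of_orderIso ?_
  exact (Submodule.MapSubtype.orderIso N)

/-- key comparison -/
lemma Submodule.eq_of_le_of_length_eq {N G : Submodule R M} (h : N ≤ G)
    (hlen : moduleLength R ↥N = moduleLength R ↥G) (hfin : moduleLength R ↥G ≠ ⊤) :
    N = G := by
  by_contra hne
  have hlt : N < G := lt_of_le_of_ne h hne
  rw [moduleLength_submodule, moduleLength_submodule] at hlen
  rw [moduleLength_submodule] at hfin
  have hG : height G ≠ ⊤ := fun hh => hfin (by rw [hh]; rfl)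
  have hN : height N < ⊤ := by
    have := WithBot.coe_inj.mp hlen
    rw [this]
    exact lt_top_iff_ne_top.mpr hG
  exact absurd (WithBot.coe_inj.mp hlen) (ne_of_lt (Order.height_strictMono hlt hN))

lemma moduleLength_eq_zero_iff {N : Submodule R M} :
    moduleLength R ↥N = (0 : ℕ∞) ↔ N = ⊥ := by
  rw [moduleLength_submodule]
  rw [show ((0:ℕ∞) : WithBot ℕ∞) = ((0:ℕ∞):WithBot ℕ∞) from rfl, WithBot.coe_inj]
  simp [Order.height_eq_zero, isMin_iff_eq_bot]

end ModLen
section MatVec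
variable {K₀ S N : Type*} [CommRing K₀] [Ring S] [AddCommGroup N] [Module S N]
  [Module K₀ N] [SMulCommClass K₀ S N]

lemma matVec_apply {n m : ℕ} (μ : Matrix (Fin n) (Fin m) K₀) (x : Fin m → N) (i : Fin n) :
    matVec (S := S) μ x i = ∑ j, μ i j • x j := rfl

lemma matVec_one {n : ℕ} (x : Fin n → N) : matVec (S := S) (1 : Matrix (Fin n) (Fin n) K₀) x = x := by
  funext i
  rw [matVec_apply]
  rw [Finset.sum_eq_single i]
  · rw [Matrix.one_apply_eq, one_smul]
  · intro j _ hj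
    rw [Matrix.one_apply_ne' hj, zero_smul]
  · simp

lemma matVec_mul {n m k : ℕ} (μ : Matrix (Fin n) (Fin m) K₀) (ν : Matrix (Fin m) (Fin k) K₀)
    (x : Fin k → N) : matVec (S := S) (μ * ν) x = matVec (S := S) μ (matVec (S := S) ν x) := by
  funext i
  simp only [matVec_apply, Matrix.mul_apply, Finset.smul_sum, Finset.sum_smul, mul_smul]
  rw [Finset.sum_comm]

/-- shear matrix -/
def sh2 (q : K₀) : Matrix (Fin 2) (Fin 2) K₀ := !![1,0;q,1]
def dg2 (q : K₀) : Matrix (Fin 2) (Fin 2) K₀ := !![1,0;0,q]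
def sw2 : Matrix (Fin 2) (Fin 2) K₀ := !![0,1;1,0]
def sg3 : Matrix (Fin 3) (Fin 3) K₀ := !![1,0,0;0,0,1;0,1,0]
def ep3 : Matrix (Fin 3) (Fin 3) K₀ := !![1,0,0;0,1,1;0,0,1]

lemma matVec_sh2 (q : K₀) (x : Fin 2 → N) :
    matVec (S := S) (sh2 q) x = ![x 0, q • x 0 + x 1] := by
  funext i
  fin_cases i <;> simp [matVec_apply, Fin.sum_univ_two, sh2, Matrix.vecHead, Matrix.vecTail]

lemma matVec_dg2 (q : K₀) (x : Fin 2 → N) :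
    matVec (S := S) (dg2 q) x = ![x 0, q • x 1] := by
  funext i
  fin_cases i <;> simp [matVec_apply, Fin.sum_univ_two, dg2, Matrix.vecHead, Matrix.vecTail]

lemma matVec_sw2 (x : Fin 2 → N) :
    matVec (S := S) (sw2 (K₀ := K₀)) x = ![x 1, x 0] := by
  funext i
  fin_cases i <;> simp [matVec_apply, Fin.sum_univ_two, sw2, Matrix.vecHead, Matrix.vecTail]

lemma matVec_sg3 (x : Fin 3 → N) :
    matVec (S := S) (sg3 (K₀ := K₀)) x = ![x 0, x 2, x 1] := by
  funext i
  fin_cases i <;> simp [matVec_apply, Fin.sum_univ_three, sg3, Matrix.vecHead, Matrix.vecTail]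

lemma matVec_ep3 (x : Fin 3 → N) :
    matVec (S := S) (ep3 (K₀ := K₀)) x = ![x 0, x 1 + x 2, x 2] := by
  funext i
  fin_cases i <;> simp [matVec_apply, Fin.sum_univ_three, ep3, Matrix.vecHead, Matrix.vecTail]

lemma isUnit_sh2 (q : K₀) : IsUnit (sh2 q) := by
  apply isUnit_iff_exists.mpr
  refine ⟨sh2 (-q), ?_, ?_⟩ <;>
    · ext i j
      fin_cases i <;> fin_cases j <;>
        simp [sh2, Matrix.mul_apply, Fin.sum_univ_two, Matrix.one_apply, Matrix.vecHead, Matrix.vecTail]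

lemma isUnit_dg2 {q : K₀} (h : IsUnit q) : IsUnit (dg2 q) := by
  obtain ⟨u, rfl⟩ := h
  apply isUnit_iff_exists.mpr
  refine ⟨dg2 (↑u⁻¹), ?_, ?_⟩ <;>
    · ext i j
      fin_cases i <;> fin_cases j <;>
        simp [dg2, Matrix.mul_apply, Fin.sum_univ_two, Matrix.one_apply, Matrix.vecHead, Matrix.vecTail]

lemma isUnit_sw2 : IsUnit (sw2 (K₀ := K₀)) := by
  apply isUnit_iff_exists.mpr
  refine ⟨sw2, ?_, ?_⟩ <;>
    · ext i j
      fin_cases i <;> fin_cases j <;>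
        simp [sw2, Matrix.mul_apply, Fin.sum_univ_two, Matrix.one_apply, Matrix.vecHead, Matrix.vecTail]

lemma isUnit_sg3 : IsUnit (sg3 (K₀ := K₀)) := by
  apply isUnit_iff_exists.mpr
  refine ⟨sg3, ?_, ?_⟩ <;>
    · ext i j
      fin_cases i <;> fin_cases j <;>
        simp [sg3, Matrix.mul_apply, Fin.sum_univ_three, Matrix.one_apply, Matrix.vecHead, Matrix.vecTail]

lemma sg3_mul_sg3 : (sg3 (K₀ := K₀)) * sg3 = 1 := by
  ext i j
  fin_cases i <;> fin_cases j <;>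
    simp [sg3, Matrix.mul_apply, Fin.sum_univ_three, Matrix.one_apply, Matrix.vecHead, Matrix.vecTail]

lemma isUnit_ep3 : IsUnit (ep3 (K₀ := K₀)) := by
  apply isUnit_iff_exists.mpr
  refine ⟨!![1,0,0;0,1,-1;0,0,1], ?_, ?_⟩ <;>
    · ext i j
      fin_cases i <;> fin_cases j <;>
        simp [ep3, Matrix.mul_apply, Fin.sum_univ_three, Matrix.one_apply, Matrix.vecHead, Matrix.vecTail]

end MatVec
section GraphCalc

variable {S N : Type*} [Ring S] [AddCommGroup N] [Module S N]

lemma mem_graphM {φ : Module.End S N} {v : Fin 2 → N} :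
    v ∈ graphM φ ↔ v 1 = φ (v 0) := Iff.rfl

lemma mem_finDSum {n m : ℕ} {V : Submodule S (Fin n → N)} {W : Submodule S (Fin m → N)}
    {x : Fin (n + m) → N} :
    x ∈ V.finDSum W ↔ (fun i => x (Fin.castAdd m i)) ∈ V ∧ (fun j => x (Fin.natAdd n j)) ∈ W :=
  Iff.rfl

lemma mem_finDSum_append {n m : ℕ} {V : Submodule S (Fin n → N)} {W : Submodule S (Fin m → N)}
    {x : Fin n → N} {y : Fin m → N} :
    Fin.append x y ∈ V.finDSum W ↔ x ∈ V ∧ y ∈ W := by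
  rw [mem_finDSum]
  constructor <;> rintro ⟨h1, h2⟩ <;> refine ⟨?_, ?_⟩
  · have : (fun i => Fin.append x y (Fin.castAdd m i)) = x := funext fun i => Fin.append_left x y i
    rwa [this] at h1
  · have : (fun j => Fin.append x y (Fin.natAdd n j)) = y := funext fun j => Fin.append_right x y j
    rwa [this] at h2
  · have : (fun i => Fin.append x y (Fin.castAdd m i)) = x := funext fun i => Fin.append_left x y i
    rwa [this]
  · have : (fun j => Fin.append x y (Fin.natAdd n j)) = y := funext fun j => Fin.append_right x y j
    rwa [this]

/-- the plane `{v : v 1 = χ (v 0)}` in `N³`. -/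
def pl1 (χ : Module.End S N) : Submodule S (Fin 3 → N) where
  carrier := {v | v 1 = χ (v 0)}
  add_mem' := by
    intro x y hx hy
    simp only [Set.mem_setOf_eq, Pi.add_apply] at *
    rw [hx, hy, map_add]
  zero_mem' := by simp
  smul_mem' := by
    intro c x hx
    simp only [Set.mem_setOf_eq, Pi.smul_apply] at *
    rw [hx, map_smul]

/-- the plane `{v : v 2 = χ (v 0)}` in `N³`. -/
def pl2 (χ : Module.End S N) : Submodule S (Fin 3 → N) where
  carrier := {v | v 2 = χ (v 0)}
  add_mem' := by
    intro x y hx hy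
    simp only [Set.mem_setOf_eq, Pi.add_apply] at *
    rw [hx, hy, map_add]
  zero_mem' := by simp
  smul_mem' := by
    intro c x hx
    simp only [Set.mem_setOf_eq, Pi.smul_apply] at *
    rw [hx, map_smul]

/-- the plane `{v : v 2 = χ (v 1)}` in `N³`. -/
def pl2' (χ : Module.End S N) : Submodule S (Fin 3 → N) where
  carrier := {v | v 2 = χ (v 1)}
  add_mem' := by
    intro x y hx hy
    simp only [Set.mem_setOf_eq, Pi.add_apply] at *
    rw [hx, hy, map_add]
  zero_mem' := by simp
  smul_mem' := by
    intro c x hx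
    simp only [Set.mem_setOf_eq, Pi.smul_apply] at *
    rw [hx, map_smul]

/-- the line `{v : v 1 = χ (v 0), v 2 = ψ (v 0)}` in `N³`. -/
def ln3 (χ ψ : Module.End S N) : Submodule S (Fin 3 → N) where
  carrier := {v | v 1 = χ (v 0) ∧ v 2 = ψ (v 0)}
  add_mem' := by
    rintro x y ⟨hx1, hx2⟩ ⟨hy1, hy2⟩
    constructor <;> simp only [Pi.add_apply] <;>
      simp [hx1, hx2, hy1, hy2, map_add]
  zero_mem' := by simp
  smul_mem' := by
    rintro c x ⟨hx1, hx2⟩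
    constructor <;> simp only [Pi.smul_apply] <;>
      simp [hx1, hx2, map_smul]

lemma mem_pl1 {χ : Module.End S N} {v : Fin 3 → N} : v ∈ pl1 χ ↔ v 1 = χ (v 0) := Iff.rfl
lemma mem_pl2 {χ : Module.End S N} {v : Fin 3 → N} : v ∈ pl2 χ ↔ v 2 = χ (v 0) := Iff.rfl
lemma mem_pl2' {χ : Module.End S N} {v : Fin 3 → N} : v ∈ pl2' χ ↔ v 2 = χ (v 1) := Iff.rfl
lemma mem_ln3 {χ ψ : Module.End S N} {v : Fin 3 → N} :
    v ∈ ln3 χ ψ ↔ v 1 = χ (v 0) ∧ v 2 = ψ (v 0) := Iff.rfl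

-- Fin index constants
lemma ca21_0 : (Fin.castAdd 1 (0 : Fin 2)) = (0 : Fin 3) := rfl
lemma ca21_1 : (Fin.castAdd 1 (1 : Fin 2)) = (1 : Fin 3) := rfl
lemma na21_0 : (Fin.natAdd 2 (0 : Fin 1)) = (2 : Fin 3) := rfl
lemma ca12_0 : (Fin.castAdd 2 (0 : Fin 1)) = (0 : Fin 3) := rfl
lemma na12_0 : (Fin.natAdd 1 (0 : Fin 2)) = (1 : Fin 3) := rfl
lemma na12_1 : (Fin.natAdd 1 (1 : Fin 2)) = (2 : Fin 3) := rfl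
lemma ca11_0 : (Fin.castAdd 1 (0 : Fin 1)) = (0 : Fin 2) := rfl
lemma na11_0 : (Fin.natAdd 1 (0 : Fin 1)) = (1 : Fin 2) := rfl

lemma mem_bot_fin1 {f : Fin 1 → N} : f ∈ (⊥ : Submodule S (Fin 1 → N)) ↔ f 0 = 0 := by
  rw [Submodule.mem_bot]
  constructor
  · intro h; rw [h]; rfl
  · intro h; funext i; fin_cases i; exact h

/-- J1 -/
lemma graphM_zero_eq : graphM (0 : Module.End S N)
    = (⊤ : Submodule S (Fin 1 → N)).finDSum (⊥ : Submodule S (Fin 1 → N)) := by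
  ext x
  rw [mem_graphM, mem_finDSum, mem_bot_fin1]
  simp only [Submodule.mem_top, true_and, LinearMap.zero_apply]
  rw [show (Fin.natAdd 1 (0 : Fin 1)) = (1 : Fin 2) from rfl]

/-- J5 -/
lemma pl1_eq_finDSum (χ : Module.End S N) :
    pl1 χ = (graphM χ).finDSum (⊤ : Submodule S (Fin 1 → N)) := by
  ext x
  rw [mem_pl1, mem_finDSum]
  simp only [Submodule.mem_top, and_true, mem_graphM]
  rw [show (Fin.castAdd 1 (1 : Fin 2)) = (1 : Fin 3) from rfl,
    show (Fin.castAdd 1 (0 : Fin 2)) = (0 : Fin 3) from rfl]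

/-- J6 -/
lemma pl2'_eq_finDSum (ψ : Module.End S N) :
    pl2' ψ = (⊤ : Submodule S (Fin 1 → N)).finDSum (graphM ψ) := by
  ext x
  rw [mem_pl2', mem_finDSum]
  simp only [Submodule.mem_top, true_and, mem_graphM]
  rw [show (Fin.natAdd 1 (1 : Fin 2)) = (2 : Fin 3) from rfl,
    show (Fin.natAdd 1 (0 : Fin 2)) = (1 : Fin 3) from rfl]

/-- J8 -/
lemma pl1_inf_pl2 (χ ψ : Module.End S N) : pl1 χ ⊓ pl2 ψ = ln3 χ ψ := by
  ext x
  rw [Submodule.mem_inf, mem_pl1, mem_pl2, mem_ln3]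

/-- J9 -/
lemma pl1_inf_pl2' (χ ψ : Module.End S N) : pl1 χ ⊓ pl2' ψ = ln3 χ (ψ * χ) := by
  ext x
  rw [Submodule.mem_inf, mem_pl1, mem_pl2', mem_ln3, Module.End.mul_apply]
  constructor
  · rintro ⟨h1, h2⟩
    exact ⟨h1, by rw [h2, h1]⟩
  · rintro ⟨h1, h2⟩
    exact ⟨h1, by rw [h2, h1]⟩

lemma ln3_le_pl1 (χ ψ : Module.End S N) : ln3 χ ψ ≤ pl1 χ := fun x hx => hx.1
lemma ln3_le_pl2 (χ ψ : Module.End S N) : ln3 χ ψ ≤ pl2 ψ := fun x hx => hx.2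
lemma ln3_le_pl2' (χ ψ : Module.End S N) : ln3 χ (ψ * χ) ≤ pl2' ψ := by
  rw [← pl1_inf_pl2']
  exact inf_le_right

/-- the equivalence of the graph with `N`. -/
def graphMEquiv (χ : Module.End S N) : ↥(graphM χ) ≃ₗ[S] N where
  toFun v := v.1 0
  map_add' _ _ := rfl
  map_smul' _ _ := rfl
  invFun u := ⟨![u, χ u], by rw [mem_graphM]; simp⟩
  left_inv := by
    rintro ⟨v, hv⟩
    rw [mem_graphM] at hv
    apply Subtype.ext
    funext i
    fin_cases i
    · rfl
    · simpa using hv.symm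
  right_inv u := rfl

/-- the equivalence of the line with `N`. -/
def ln3Equiv (χ ψ : Module.End S N) : ↥(ln3 χ ψ) ≃ₗ[S] N where
  toFun v := v.1 0
  map_add' _ _ := rfl
  map_smul' _ _ := rfl
  invFun u := ⟨![u, χ u, ψ u], by rw [mem_ln3]; constructor <;> simp⟩
  left_inv := by
    rintro ⟨v, hv⟩
    rw [mem_ln3] at hv
    apply Subtype.ext
    funext i
    fin_cases i
    · rfl
    · simpa using hv.1.symm
    · simpa using hv.2.symm
  right_inv u := rfl

/-- the equivalence of `⊤ ≤ Fin 1 → N` with `N`. -/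
def top1Equiv : ↥(⊤ : Submodule S (Fin 1 → N)) ≃ₗ[S] N :=
  Submodule.topEquiv.trans (LinearEquiv.funUnique (Fin 1) S N)

section WithK0
variable {K₀ : Type*} [CommRing K₀] [Module K₀ N] [SMulCommClass K₀ S N]

/-- J2 -/
lemma graphM_map_sh2 [SMulCommClass S K₀ N] (q : K₀) (χ : Module.End S N) :
    (graphM χ).map (matVec (S := S) (sh2 q)) = graphM (q • (1 : Module.End S N) + χ) := by
  ext x
  rw [Submodule.mem_map]
  constructor
  · rintro ⟨y, hy, rfl⟩
    rw [mem_graphM] at hy ⊢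
    rw [matVec_sh2]
    simp [hy]
  · intro hx
    rw [mem_graphM] at hx
    refine ⟨![x 0, χ (x 0)], by rw [mem_graphM]; simp, ?_⟩
    rw [matVec_sh2]
    funext i
    fin_cases i
    · simp
    · simpa using hx.symm

/-- J3 -/
lemma graphM_map_dg2 [SMulCommClass S K₀ N] (q : K₀) (χ : Module.End S N) :
    (graphM χ).map (matVec (S := S) (dg2 q)) = graphM (q • χ) := by
  ext x
  rw [Submodule.mem_map]
  constructor
  · rintro ⟨y, hy, rfl⟩
    rw [mem_graphM] at hy ⊢
    rw [matVec_dg2]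
    simp [hy]
  · intro hx
    rw [mem_graphM] at hx
    refine ⟨![x 0, χ (x 0)], by rw [mem_graphM]; simp, ?_⟩
    rw [matVec_dg2]
    funext i
    fin_cases i
    · simp
    · simpa using hx.symm

/-- J4 -/
lemma graphM_one_map_sw2 :
    (graphM (1 : Module.End S N)).map (matVec (S := S) (sw2 (K₀ := K₀))) = graphM 1 := by
  ext x
  rw [Submodule.mem_map]
  constructor
  · rintro ⟨y, hy, rfl⟩
    rw [mem_graphM] at hy ⊢
    rw [matVec_sw2]
    simp [hy]
  · intro hx
    rw [mem_graphM] at hx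
    simp only [Module.End.one_apply] at hx
    refine ⟨![x 1, x 0], by rw [mem_graphM]; simpa using hx.symm, ?_⟩
    rw [matVec_sw2]
    funext i
    fin_cases i <;> simp

/-- J7 -/
lemma pl2_eq_map_sg3 (ψ : Module.End S N) :
    pl2 ψ = (pl1 ψ).map (matVec (S := S) (sg3 (K₀ := K₀))) := by
  ext x
  rw [Submodule.mem_map, mem_pl2]
  constructor
  · intro hx
    refine ⟨![x 0, x 2, x 1], by rw [mem_pl1]; simpa using hx, ?_⟩
    rw [matVec_sg3]
    funext i
    fin_cases i <;> simp
  · rintro ⟨y, hy, rfl⟩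
    rw [mem_pl1] at hy
    rw [matVec_sg3]
    simpa using hy

/-- J10 -/
lemma ln3_map_ep3 (χ ψ : Module.End S N) :
    (ln3 χ ψ).map (matVec (S := S) (ep3 (K₀ := K₀))) = ln3 (χ + ψ) ψ := by
  ext x
  rw [Submodule.mem_map, mem_ln3]
  constructor
  · rintro ⟨y, hy, rfl⟩
    rw [mem_ln3] at hy
    rw [matVec_ep3]
    constructor
    · simp [hy.1, hy.2]
    · simp [hy.2]
  · rintro ⟨h1, h2⟩
    refine ⟨![x 0, χ (x 0), ψ (x 0)], by rw [mem_ln3]; constructor <;> simp, ?_⟩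
    rw [matVec_ep3]
    funext i
    fin_cases i
    · simp
    · simp only [LinearMap.add_apply] at h1
      simpa using h1.symm
    · simpa using h2.symm

end WithK0
end GraphCalc
section KSide
variable {K₀ K : Type*} [Field K₀] [Field K] [Algebra K₀ K]

lemma mem_graphK {a : K} {v : Fin 2 → K} : v ∈ graphK K a ↔ v 1 = a * v 0 := Iff.rfl

lemma graphK_eq_graphM (a : K) : graphK K a = graphM (a • (1 : Module.End K K)) := by
  ext v
  rw [mem_graphK, mem_graphM]
  simp [smul_eq_mul]

lemma end_smul_one_add (a b : K) :
    a • (1 : Module.End K K) + b • (1 : Module.End K K) = (a + b) • 1 := (add_smul a b 1).symm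

lemma end_smul_one_mul (a b : K) :
    (b • (1 : Module.End K K)) * (a • (1 : Module.End K K)) = (b * a) • 1 := by
  apply LinearMap.ext
  intro x
  simp [Module.End.mul_apply, smul_eq_mul]
  ring

lemma graphK_algebraMap_add [SMulCommClass K K₀ K] (q : K₀) (a : K) :
    graphK K (algebraMap K₀ K q + a) = graphM (q • (1 : Module.End K K) + a • 1) := by
  ext v
  rw [mem_graphK, mem_graphM]
  simp [smul_eq_mul, add_mul, Algebra.smul_def]

lemma graphK_algebraMap_mul [SMulCommClass K K₀ K] (q : K₀) (a : K) :
    graphK K (algebraMap K₀ K q * a) = graphM (q • (a • (1 : Module.End K K))) := by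
  ext v
  rw [mem_graphK, mem_graphM]
  simp [smul_eq_mul, Algebra.smul_def, mul_assoc]

lemma graphK_map_sw2 {c : K} (hc : c ≠ 0) :
    (graphK K c).map (matVec (S := K) (sw2 (K₀ := K₀))) = graphK K c⁻¹ := by
  ext x
  rw [Submodule.mem_map]
  constructor
  · rintro ⟨y, hy, rfl⟩
    rw [mem_graphK] at hy ⊢
    rw [matVec_sw2]
    simp only [Matrix.cons_val_one, Matrix.head_cons, Matrix.cons_val_zero]
    rw [hy]
    field_simp
  · intro hx
    rw [mem_graphK] at hx
    refine ⟨![x 1, x 0], by rw [mem_graphK]; simp [hx]; field_simp, ?_⟩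
    rw [matVec_sw2]
    funext i
    fin_cases i <;> simp

lemma finrank_graphM {S N : Type*} [Ring S] [AddCommGroup N] [Module S N]
    (χ : Module.End S N) : Module.finrank S ↥(graphM χ) = Module.finrank S N :=
  (graphMEquiv χ).finrank_eq

lemma finrank_ln3 {S N : Type*} [Ring S] [AddCommGroup N] [Module S N]
    (χ ψ : Module.End S N) : Module.finrank S ↥(ln3 χ ψ) = Module.finrank S N :=
  (ln3Equiv χ ψ).finrank_eq

end KSide
section InflatorLemmas

open Module

variable {K₀ K R M : Type*} [Field K₀] [Field K] [Algebra K₀ K]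
    [Ring R] [Algebra K₀ R] [AddCommGroup M] [Module R M] [Module K₀ M]
    [SMulCommClass K₀ R M] [SMulCommClass R K₀ M] {d : ℕ}

lemma graphM_injective {φ ψ : Module.End R M} (h : graphM φ = graphM ψ) : φ = ψ := by
  apply LinearMap.ext
  intro u
  have h1 : (![u, φ u] : Fin 2 → M) ∈ graphM φ := by rw [mem_graphM]; simp
  rw [h, mem_graphM] at h1
  simpa using h1

variable (I : Inflator K₀ K R M d)

lemma wb_coe_ne_top (n : ℕ) : ((n : ℕ∞) : WithBot ℕ∞) ≠ ⊤ := by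
  intro h
  rw [show ((⊤ : WithBot ℕ∞)) = ((⊤ : ℕ∞) : WithBot ℕ∞) from rfl, WithBot.coe_inj] at h
  exact (ENat.coe_ne_top n) h

lemma Inflator.ς_bot (n : ℕ) : I.ς n (⊥ : Submodule K (Fin n → K)) = ⊥ := by
  rw [← moduleLength_eq_zero_iff, I.length_eq]
  norm_num [finrank_bot]

variable (hM : moduleLength R M = ((d : ℕ∞) : WithBot ℕ∞))
include hM

lemma Inflator.ς_top1 : I.ς 1 (⊤ : Submodule K (Fin 1 → K)) = ⊤ := by
  apply Submodule.eq_of_le_of_length_eq le_top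
  · rw [I.length_eq, moduleLength_congr (top1Equiv (S := R) (N := M)), hM]
    norm_num [finrank_top, Module.finrank_pi]
  · rw [moduleLength_congr (top1Equiv (S := R) (N := M)), hM]
    exact wb_coe_ne_top d

lemma Inflator.nontrivialM (hd : 1 ≤ d) : Nontrivial M := by
  by_contra hcon
  rw [not_nontrivial_iff_subsingleton] at hcon
  have : Subsingleton (Submodule R M) := (Submodule.subsingleton_iff R).mpr hcon
  have h0 : moduleLength R M ≤ 0 := Order.krullDim_nonpos_of_subsingleton
  rw [hM] at h0
  have : (d : ℕ∞) ≤ ((0 : ℕ) : ℕ∞) := by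
    exact_mod_cast WithBot.coe_le_coe.mp (by exact_mod_cast h0)
  have : d ≤ 0 := Nat.cast_le.mp this
  omega

lemma Inflator.spec_zero : I.Specializes 0 0 := by
  show I.ς 2 (graphK K 0) = graphM 0
  have h0 : graphK K 0 = (⊤ : Submodule K (Fin 1 → K)).finDSum (⊥ : Submodule K (Fin 1 → K)) := by
    rw [graphK_eq_graphM, zero_smul]
    exact graphM_zero_eq
  have hds : I.ς 2 ((⊤ : Submodule K (Fin 1 → K)).finDSum (⊥ : Submodule K (Fin 1 → K)))
      = (I.ς 1 ⊤).finDSum (I.ς 1 ⊥) := I.map_dsum 1 1 ⊤ ⊥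
  rw [h0, hds, I.ς_top1 hM, I.ς_bot]
  exact graphM_zero_eq.symm

lemma Inflator.spec_shear {a : K} {φ : Module.End R M} (h : I.Specializes a φ) (q : K₀) :
    I.Specializes (algebraMap K₀ K q + a) (q • (1 : Module.End R M) + φ) := by
  haveI : SMulCommClass K K₀ K := SMulCommClass.symm K₀ K K
  haveI : SMulCommClass R K₀ M := SMulCommClass.symm K₀ R M
  show I.ς 2 _ = _
  have h' : I.ς 2 (graphK K a) = graphM φ := h
  rw [graphK_algebraMap_add, ← graphM_map_sh2 q (a • 1),
    ← graphK_eq_graphM, I.equivariant 2 (sh2 q) (isUnit_sh2 q), h', graphM_map_sh2]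

lemma Inflator.spec_scale {a : K} {φ : Module.End R M} (h : I.Specializes a φ) {q : K₀}
    (hq : q ≠ 0) : I.Specializes (algebraMap K₀ K q * a) (q • φ) := by
  haveI : SMulCommClass K K₀ K := SMulCommClass.symm K₀ K K
  haveI : SMulCommClass R K₀ M := SMulCommClass.symm K₀ R M
  show I.ς 2 _ = _
  have h' : I.ς 2 (graphK K a) = graphM φ := h
  rw [graphK_algebraMap_mul, ← graphM_map_dg2 q (a • 1), ← graphK_eq_graphM,
    I.equivariant 2 (dg2 q) (isUnit_dg2 (hq.isUnit)), h', graphM_map_dg2]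

lemma Inflator.spec_algebraMap (q : K₀) :
    I.Specializes (algebraMap K₀ K q) (q • (1 : Module.End R M)) := by
  have := I.spec_shear hM (I.spec_zero hM) q
  simpa using this

lemma Inflator.spec_one : I.Specializes 1 1 := by
  have := I.spec_algebraMap hM (1 : K₀)
  simpa using this

lemma Inflator.spec_inv {c : K} (hc : c ≠ 0) (h : I.Specializes c 1) :
    I.Specializes c⁻¹ 1 := by
  show I.ς 2 _ = _
  have h' : I.ς 2 (graphK K c) = graphM 1 := h
  rw [← graphK_map_sw2 (K₀ := K₀) hc, I.equivariant 2 sw2 isUnit_sw2, h',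
    graphM_one_map_sw2]

-- ς of pl1, pl2, pl2'
lemma Inflator.ς_pl1 {a : K} {φ : Module.End R M} (h : I.Specializes a φ) :
    I.ς 3 (pl1 (a • (1 : Module.End K K))) = pl1 φ := by
  have h' : I.ς 2 (graphK K a) = graphM φ := h
  rw [pl1_eq_finDSum, ← graphK_eq_graphM]
  have hds : I.ς 3 ((graphK K a).finDSum (⊤ : Submodule K (Fin 1 → K)))
      = (I.ς 2 (graphK K a)).finDSum (I.ς 1 ⊤) := I.map_dsum 2 1 _ _
  rw [hds, h', I.ς_top1 hM, ← pl1_eq_finDSum]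

lemma Inflator.ς_pl1' (c : K) :
    I.ς 3 (pl1 (c • (1 : Module.End K K)))
      = (I.ς 2 (graphK K c)).finDSum (⊤ : Submodule R (Fin 1 → M)) := by
  rw [pl1_eq_finDSum, ← graphK_eq_graphM]
  have hds : I.ς 3 ((graphK K c).finDSum (⊤ : Submodule K (Fin 1 → K)))
      = (I.ς 2 (graphK K c)).finDSum (I.ς 1 ⊤) := I.map_dsum 2 1 _ _
  rw [hds, I.ς_top1 hM]

lemma Inflator.ς_pl2 {b : K} {ψ : Module.End R M} (h : I.Specializes b ψ) :
    I.ς 3 (pl2 (b • (1 : Module.End K K))) = pl2 ψ := by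
  rw [pl2_eq_map_sg3 (K₀ := K₀), I.equivariant 3 sg3 isUnit_sg3, I.ς_pl1 hM h,
    ← pl2_eq_map_sg3]

lemma Inflator.ς_pl2'' {b : K} {ψ : Module.End R M} (h : I.Specializes b ψ) :
    I.ς 3 (pl2' (b • (1 : Module.End K K))) = pl2' ψ := by
  have h' : I.ς 2 (graphK K b) = graphM ψ := h
  rw [pl2'_eq_finDSum, ← graphK_eq_graphM]
  have hds : I.ς 3 ((⊤ : Submodule K (Fin 1 → K)).finDSum (graphK K b))
      = (I.ς 1 ⊤).finDSum (I.ς 2 (graphK K b)) := I.map_dsum 1 2 _ _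
  rw [hds, h', I.ς_top1 hM, ← pl2'_eq_finDSum]

lemma Inflator.len_ln3K (χ ψ : Module.End K K) :
    moduleLength R ↥(I.ς 3 (ln3 χ ψ)) = ((d : ℕ∞) : WithBot ℕ∞) := by
  rw [I.length_eq, finrank_ln3, Module.finrank_self, mul_one]

lemma len_ln3M (φ ψ : Module.End R M) :
    moduleLength R ↥(ln3 φ ψ) = ((d : ℕ∞) : WithBot ℕ∞) := by
  rw [moduleLength_congr (ln3Equiv φ ψ), hM]

lemma Inflator.ς_ln3 {a b : K} {φ ψ : Module.End R M}
    (ha : I.Specializes a φ) (hb : I.Specializes b ψ) :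
    I.ς 3 (ln3 (a • (1 : Module.End K K)) (b • 1)) = ln3 φ ψ := by
  apply Submodule.eq_of_le_of_length_eq
  · rw [← pl1_inf_pl2 φ ψ]
    apply le_inf
    · rw [← I.ς_pl1 hM ha]
      exact I.mono 3 _ _ (ln3_le_pl1 _ _)
    · rw [← I.ς_pl2 hM hb]
      exact I.mono 3 _ _ (ln3_le_pl2 _ _)
  · rw [I.len_ln3K hM, len_ln3M hM]
  · rw [len_ln3M hM]
    exact wb_coe_ne_top d

lemma Inflator.ς_ln3' {a b : K} {φ ψ : Module.End R M}
    (ha : I.Specializes a φ) (hb : I.Specializes b ψ) :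
    I.ς 3 (ln3 (a • (1 : Module.End K K)) ((b * a) • 1)) = ln3 φ (ψ * φ) := by
  apply Submodule.eq_of_le_of_length_eq
  · rw [← pl1_inf_pl2' φ ψ]
    apply le_inf
    · rw [← I.ς_pl1 hM ha]
      exact I.mono 3 _ _ (ln3_le_pl1 _ _)
    · rw [← I.ς_pl2'' hM hb]
      refine I.mono 3 _ _ ?_
      rw [← end_smul_one_mul]
      exact ln3_le_pl2' _ _
  · rw [I.len_ln3K hM, len_ln3M hM]
  · rw [len_ln3M hM]
    exact wb_coe_ne_top d

lemma Inflator.len_graphK (c : K) :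
    moduleLength R ↥(I.ς 2 (graphK K c)) = ((d : ℕ∞) : WithBot ℕ∞) := by
  rw [I.length_eq, graphK_eq_graphM, finrank_graphM, Module.finrank_self, mul_one]

lemma len_graphM (φ : Module.End R M) :
    moduleLength R ↥(graphM φ) = ((d : ℕ∞) : WithBot ℕ∞) := by
  rw [moduleLength_congr (graphMEquiv φ), hM]

lemma Inflator.spec_add {a b : K} {φ ψ : Module.End R M}
    (ha : I.Specializes a φ) (hb : I.Specializes b ψ) :
    I.Specializes (a + b) (φ + ψ) := by
  have h1 := I.ς_ln3 hM ha hb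
  have h2 : I.ς 3 (ln3 ((a + b) • (1 : Module.End K K)) (b • 1)) = ln3 (φ + ψ) ψ := by
    have he : (ln3 (a • (1 : Module.End K K)) (b • 1)).map (matVec (S := K) (ep3 (K₀ := K₀)))
        = ln3 ((a + b) • 1) (b • 1) := by
      rw [ln3_map_ep3, end_smul_one_add]
    rw [← he, I.equivariant 3 ep3 isUnit_ep3, h1, ln3_map_ep3]
  have h3 : ln3 (φ + ψ) ψ ≤ I.ς 3 (pl1 ((a + b) • (1 : Module.End K K))) := by
    rw [← h2]
    exact I.mono 3 _ _ (ln3_le_pl1 _ _)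
  rw [I.ς_pl1' hM (a + b)] at h3
  have h5 : graphM (φ + ψ) ≤ I.ς 2 (graphK K (a + b)) := by
    intro x hx
    rw [mem_graphM] at hx
    set w : Fin 3 → M := Fin.append x ![ψ (x 0)] with hw
    have hw0 : w 0 = x 0 := Fin.append_left x _ 0
    have hw1 : w 1 = x 1 := Fin.append_left x _ 1
    have hw2 : w 2 = ψ (x 0) := Fin.append_right x _ 0
    have hmem : w ∈ ln3 (φ + ψ) ψ := by
      rw [mem_ln3, hw0, hw1, hw2]
      exact ⟨hx, rfl⟩
    have hmem2 := h3 hmem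
    rw [hw] at hmem2
    exact (mem_finDSum_append.mp hmem2).1
  have heq := Submodule.eq_of_le_of_length_eq h5
    (by rw [len_graphM (R := R) (M := M) hM, I.len_graphK hM]) (by rw [I.len_graphK hM]; exact wb_coe_ne_top d)
  exact heq.symm

lemma Inflator.spec_mul {a b : K} {φ ψ : Module.End R M}
    (ha : I.Specializes a φ) (hb : I.Specializes b ψ) :
    I.Specializes (b * a) (ψ * φ) := by
  have h1 := I.ς_ln3' hM ha hb
  have h3 : ln3 φ (ψ * φ) ≤ I.ς 3 (pl2 ((b * a) • (1 : Module.End K K))) := by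
    rw [← h1]
    exact I.mono 3 _ _ (ln3_le_pl2 _ _)
  have h4 : I.ς 3 (pl2 ((b * a) • (1 : Module.End K K)))
      = ((I.ς 2 (graphK K (b * a))).finDSum (⊤ : Submodule R (Fin 1 → M))).map
          (matVec (S := R) (sg3 (K₀ := K₀))) := by
    rw [pl2_eq_map_sg3 (K₀ := K₀), I.equivariant 3 sg3 isUnit_sg3, I.ς_pl1' hM]
  rw [h4] at h3
  have h5 : graphM (ψ * φ) ≤ I.ς 2 (graphK K (b * a)) := by
    intro x hx
    rw [mem_graphM] at hx
    set w : Fin 3 → M := ![x 0, φ (x 0), (ψ * φ) (x 0)] with hw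
    have hmem : w ∈ ln3 φ (ψ * φ) := by
      rw [mem_ln3, hw]
      constructor <;> simp
    obtain ⟨z, hz, hzw⟩ := h3 hmem
    have hzz : z = matVec (S := R) (sg3 (K₀ := K₀)) w := by
      rw [← hzw, ← matVec_mul, sg3_mul_sg3, matVec_one]
    have hzval : z = ![x 0, (ψ * φ) (x 0), φ (x 0)] := by
      rw [hzz, matVec_sg3, hw]
      funext i
      fin_cases i <;> simp
    have hfst : (fun i => z (Fin.castAdd 1 i)) ∈ I.ς 2 (graphK K (b * a)) := hz.1
    have h0 : z (0 : Fin 3) = x 0 := by rw [hzval]; simp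
    have h1 : z (1 : Fin 3) = x 1 := by rw [hzval]; simpa using hx.symm
    have hfx : (fun i => z (Fin.castAdd 1 i)) = x := by
      funext i
      fin_cases i
      · exact h0
      · exact h1
    rwa [hfx] at hfst
  have heq := Submodule.eq_of_le_of_length_eq h5
    (by rw [len_graphM (R := R) (M := M) hM, I.len_graphK hM]) (by rw [I.len_graphK hM]; exact wb_coe_ne_top d)
  exact heq.symm

end InflatorLemmas

/-- For a `d`-inflator `ς` on `K`: the fundamental ring is a `K₀`-subalgebra of `K`;
each of its elements specializes to a unique endomorphism, and the resulting
generalized residue map is a (`K₀`-linear, unital) ring homomorphism sending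
`q ∈ K₀` to `q • id`; the fundamental ideal is its kernel, an ideal of the
fundamental ring; and the fundamental ideal lies in the Jacobson radical, so that in
particular every element of `1 + I_ς` is a unit of the fundamental ring. -/
theorem fundamental_ring_and_ideal
    {K₀ K R M : Type*} [Field K₀] [Infinite K₀] [Field K] [Algebra K₀ K]
    [Ring R] [Algebra K₀ R] [AddCommGroup M] [Module R M] [Module K₀ M]
    [SMulCommClass K₀ R M] {d : ℕ} (hd : 1 ≤ d) [IsSemisimpleModule R M]
    (hM : moduleLength R M = ((d : ℕ∞) : WithBot ℕ∞))
    (I : Inflator K₀ K R M d) :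
    (∃ A : Subalgebra K₀ K, (A : Set K) = I.fundSet) ∧
    (∃ res : K → Module.End R M,
      (∀ a ∈ I.fundSet, I.Specializes a (res a)) ∧
      (∀ a ∈ I.fundSet, ∀ φ : Module.End R M, I.Specializes a φ → φ = res a) ∧
      (∀ a ∈ I.fundSet, ∀ b ∈ I.fundSet, res (a + b) = res a + res b) ∧
      (∀ a ∈ I.fundSet, ∀ b ∈ I.fundSet, res (a * b) = res a * res b) ∧
      res 1 = 1 ∧
      (∀ (q : K₀) (u : M), res (algebraMap K₀ K q) u = q • u) ∧
      (∀ (q : K₀), ∀ a ∈ I.fundSet, ∀ u : M,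
        res (algebraMap K₀ K q * a) u = q • res a u) ∧
      (∀ a ∈ I.fundSet, (a ∈ I.fundIdealSet ↔ res a = 0))) ∧
    (I.fundIdealSet ⊆ I.fundSet ∧
      (∀ a ∈ I.fundIdealSet, ∀ b ∈ I.fundIdealSet, a + b ∈ I.fundIdealSet) ∧
      (∀ r ∈ I.fundSet, ∀ a ∈ I.fundIdealSet, r * a ∈ I.fundIdealSet)) ∧
    (∀ a ∈ I.fundIdealSet, ∀ r ∈ I.fundSet,
      (1 + r * a) ∈ I.fundSet ∧ ∃ b ∈ I.fundSet, (1 + r * a) * b = 1) := by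
  classical
  haveI : SMulCommClass R K₀ M := SMulCommClass.symm K₀ R M
  have uniq : ∀ (a : K) (φ ψ : Module.End R M),
      I.Specializes a φ → I.Specializes a ψ → φ = ψ := by
    intro a φ ψ h1 h2
    exact graphM_injective ((h1 : I.ς 2 (graphK K a) = graphM φ).symm.trans h2)
  set res : K → Module.End R M :=
    fun a => if h : ∃ φ, I.Specializes a φ then h.choose else 0 with hres
  have hres_spec : ∀ a ∈ I.fundSet, I.Specializes a (res a) := by
    intro a ha
    obtain ⟨φ, hφ⟩ := ha
    have hex : ∃ φ, I.Specializes a φ := ⟨φ, hφ⟩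
    rw [hres]
    simp only [dif_pos hex]
    exact hex.choose_spec
  have resval : ∀ (a : K) (φ : Module.End R M), I.Specializes a φ → res a = φ := by
    intro a φ h
    exact uniq a (res a) φ (hres_spec a ⟨φ, h⟩) h
  have hmem : ∀ (a : K) (φ : Module.End R M), I.Specializes a φ → a ∈ I.fundSet :=
    fun a φ h => ⟨φ, h⟩
  -- ideal multiplication
  have hidmul : ∀ r ∈ I.fundSet, ∀ a ∈ I.fundIdealSet, I.Specializes (r * a) 0 := by
    intro r hr a ha
    have := I.spec_mul hM (hres_spec r hr) (ha : I.Specializes a 0)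
    rw [mul_comm a r] at this
    simpa using this
  refine ⟨?_, ?_, ?_, ?_⟩
  · exact ⟨{ carrier := I.fundSet
             add_mem' := fun ha hb => hmem _ _ (I.spec_add hM (hres_spec _ ha) (hres_spec _ hb))
             mul_mem' := fun ha hb => hmem _ _ (I.spec_mul hM (hres_spec _ hb) (hres_spec _ ha))
             one_mem' := ⟨1, I.spec_one hM⟩
             zero_mem' := ⟨0, I.spec_zero hM⟩
             algebraMap_mem' := fun q => ⟨q • 1, I.spec_algebraMap hM q⟩ }, rfl⟩
  · refine ⟨res, hres_spec, ?_, ?_, ?_, ?_, ?_, ?_, ?_⟩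
    · intro a ha φ h
      exact (resval a φ h).symm
    · intro a ha b hb
      exact resval _ _ (I.spec_add hM (hres_spec a ha) (hres_spec b hb))
    · intro a ha b hb
      exact resval _ _ (I.spec_mul hM (hres_spec b hb) (hres_spec a ha))
    · rw [resval 1 1 (I.spec_one hM)]
    · intro q u
      rw [resval _ _ (I.spec_algebraMap hM q)]
      simp
    · intro q a ha u
      by_cases hq : q = 0
      · subst hq
        simp only [map_zero, zero_mul, zero_smul]
        rw [resval _ _ (I.spec_zero hM)]
        simp
      · rw [resval _ _ (I.spec_scale hM (hres_spec a ha) hq)]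
        simp
    · intro a ha
      constructor
      · intro h
        exact resval a 0 h
      · intro h
        have := hres_spec a ha
        rwa [h] at this
  · refine ⟨fun a ha => ⟨0, ha⟩, ?_, ?_⟩
    · intro a ha b hb
      have := I.spec_add hM (ha : I.Specializes a 0) (hb : I.Specializes b 0)
      exact (by simpa using this : I.Specializes (a + b) 0)
    · intro r hr a ha
      exact hidmul r hr a ha
  · intro a ha r hr
    have hra : I.Specializes (r * a) 0 := hidmul r hr a ha
    have h1ra : I.Specializes (1 + r * a) 1 := by
      have := I.spec_add hM (I.spec_one hM) hra
      simpa using this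
    have hne : (1 + r * a) ≠ 0 := by
      intro h0
      rw [h0] at h1ra
      have h10 : (1 : Module.End R M) = 0 := uniq 0 1 0 h1ra (I.spec_zero hM)
      haveI := Inflator.nontrivialM hM hd
      obtain ⟨u, hu⟩ := exists_ne (0 : M)
      apply hu
      calc u = (1 : Module.End R M) u := rfl
        _ = (0 : Module.End R M) u := by rw [h10]
        _ = 0 := rfl
    have hinv : I.Specializes (1 + r * a)⁻¹ 1 := I.spec_inv hM hne h1ra
    exact ⟨hmem _ _ h1ra, (1 + r * a)⁻¹, hmem _ _ hinv, mul_inv_cancel₀ hne⟩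
end

section
/- Let K be a field and O_1, …, O_m pairwise incomparable valuation subrings of K (for i ≠ j, neither O_i ⊆ O_j nor O_j ⊆ O_i), with maximal ideals 𝔪_1, …, 𝔪_m. Let R = O_1 ∩ ⋯ ∩ O_m. Then for every n ≥ 1, every K-linear subspace V ≤ K^n, and every index i, one has (V ∩ R^n) + 𝔪_i^n = (V ∩ O_i^n) + 𝔪_i^n as additive subgroups of O_i^n; equivalently, the image of V ∩ R^n under the coordinatewise residue map O_i^n → (O_i/𝔪_i)^n equals the image of V ∩ O_i^n. -/
section Aux

variable {K : Type*} [Field K] {m : ℕ} (O : Fin m → ValuationSubring K)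

/-- `1 < γ ^ k` for `k ≠ 0` in a linearly ordered comm group with zero. -/
private lemma my_one_lt_pow {Γ : Type*} [LinearOrderedCommGroupWithZero Γ] {γ : Γ}
    (hγ : 1 < γ) {k : ℕ} (hk : k ≠ 0) : 1 < γ ^ k := by
  induction k with
  | zero => exact absurd rfl hk
  | succ n ih =>
    rcases Nat.eq_zero_or_pos n with rfl | hn
    · simpa using hγ
    · have h1 : (1 : Γ) < γ ^ n := ih hn.ne'
      calc (1 : Γ) < γ ^ n := h1
        _ = γ ^ n * 1 := (mul_one _).symm
        _ ≤ γ ^ n * γ := mul_le_mul_right hγ.le _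
        _ = γ ^ (n + 1) := (pow_succ γ n).symm

private lemma my_pow_inj {Γ : Type*} [LinearOrderedCommGroupWithZero Γ] {γ : Γ}
    (hγ : 1 < γ) {k₁ k₂ : ℕ} (h : γ ^ k₁ = γ ^ k₂) : k₁ = k₂ := by
  have hγ0 : γ ≠ 0 := (zero_le_one.trans_lt hγ).ne'
  by_contra hne
  wlog hlt : k₁ < k₂ generalizing k₁ k₂
  · exact this h.symm (Ne.symm hne) (by omega)
  have hd : k₂ = k₁ + (k₂ - k₁) := by omega
  have hpow : γ ^ k₁ * γ ^ (k₂ - k₁) = γ ^ k₁ * 1 := by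
    rw [← pow_add, ← hd, ← h, mul_one]
  have h1 : γ ^ (k₂ - k₁) = 1 := mul_left_cancel₀ (pow_ne_zero _ hγ0) hpow
  have : (1 : Γ) < γ ^ (k₂ - k₁) := my_one_lt_pow hγ (by omega)
  rw [h1] at this
  exact lt_irrefl _ this

/-- Choose a positive natural number avoiding, for each index, the (at most one) bad value. -/
private lemma exists_avoid (P : Fin m → ℕ → Prop)
    (hP : ∀ l k₁ k₂, P l k₁ → P l k₂ → k₁ = k₂) :
    ∃ k : ℕ, k ≠ 0 ∧ ∀ l, ¬ P l k := by
  classical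
  set f : Fin m → ℕ := fun l => if h : ∃ k, P l k then h.choose else 0 with hf
  refine ⟨Finset.univ.sup f + 1, by omega, fun l hPl => ?_⟩
  have h : ∃ k, P l k := ⟨_, hPl⟩
  have h1 : f l = h.choose := by simp only [hf, dif_pos h]
  have hchoose : h.choose = Finset.univ.sup f + 1 := hP l _ _ h.choose_spec hPl
  have hle : f l ≤ Finset.univ.sup f := Finset.le_sup (Finset.mem_univ l)
  omega

/-- From incomparability, get an element small at `i` and big at `w`. -/
private lemma pair_elem
    (hinc : ∀ i j : Fin m, i ≠ j → ¬((O i : Set K) ⊆ (O j : Set K)))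
    {i w : Fin m} (hiw : i ≠ w) :
    ∃ t : K, (O i).valuation t < 1 ∧ 1 < (O w).valuation t := by
  obtain ⟨b, hbi, hbw⟩ := Set.not_subset.1 (hinc i w hiw)
  obtain ⟨a, haw, hai⟩ := Set.not_subset.1 (hinc w i hiw.symm)
  have ha0 : a ≠ 0 := fun h => hai (h ▸ (O i).zero_mem)
  have hb0 : b ≠ 0 := fun h => hbw (h ▸ (O w).zero_mem)
  have hbi' : (O i).valuation b ≤ 1 := ((O i).valuation_le_one_iff b).2 hbi
  have hai' : 1 < (O i).valuation a := by
    by_contra h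
    exact hai (((O i).valuation_le_one_iff a).1 (not_lt.1 h))
  have haw' : (O w).valuation a ≤ 1 := ((O w).valuation_le_one_iff a).2 haw
  have hbw' : 1 < (O w).valuation b := by
    by_contra h
    exact hbw (((O w).valuation_le_one_iff b).1 (not_lt.1 h))
  refine ⟨b * a⁻¹, ?_, ?_⟩
  · rw [map_mul, map_inv₀]
    have hainv : ((O i).valuation a)⁻¹ < 1 := by
      have h0 : ((O i).valuation a) ≠ 0 := ((O i).valuation.ne_zero_iff).2 ha0
      rw [inv_lt_one₀ (zero_lt_iff.2 h0)]
      exact hai'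
    calc (O i).valuation b * ((O i).valuation a)⁻¹
        ≤ 1 * ((O i).valuation a)⁻¹ := mul_le_mul_left hbi' _
      _ = ((O i).valuation a)⁻¹ := one_mul _
      _ < 1 := hainv
  · rw [map_mul, map_inv₀]
    have hainv : 1 ≤ ((O w).valuation a)⁻¹ := by
      have h0 : ((O w).valuation a) ≠ 0 := ((O w).valuation.ne_zero_iff).2 ha0
      rw [one_le_inv₀ (zero_lt_iff.2 h0)]
      exact haw'
    calc (1 : (O w).ValueGroup) < (O w).valuation b := hbw'
      _ = (O w).valuation b * 1 := (mul_one _).symm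
      _ ≤ (O w).valuation b * ((O w).valuation a)⁻¹ := mul_le_mul_right hainv _

/-- Zariski–Samuel: element small at `i`, big at every member of `S`. -/
private lemma exists_deep
    (hinc : ∀ i j : Fin m, i ≠ j → ¬((O i : Set K) ⊆ (O j : Set K)))
    (i : Fin m) (S : Finset (Fin m)) :
    i ∉ S → ∃ z : K, (O i).valuation z < 1 ∧ ∀ l ∈ S, 1 < (O l).valuation z := by
  classical
  induction S using Finset.induction_on with
  | empty => exact fun _ => ⟨0, by simp, by simp⟩
  | @insert w S hwS ih =>
    intro hiwS
    have hiw : i ≠ w := fun h => hiwS (h ▸ Finset.mem_insert_self w S)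
    have hiS' : i ∉ S := fun h => hiwS (Finset.mem_insert_of_mem h)
    obtain ⟨z₀, hz₀i, hz₀S⟩ := ih hiS'
    obtain ⟨t, hti, htw⟩ := pair_elem O hinc hiw
    -- choose exponent k avoiding cancellations
    obtain ⟨k, hk0, hk⟩ := exists_avoid
      (fun l k => 1 < (O l).valuation z₀ ∧ ((O l).valuation z₀) ^ k = (O l).valuation t)
      (fun l k₁ k₂ h₁ h₂ => my_pow_inj h₁.1 (h₁.2.trans h₂.2.symm))
    refine ⟨z₀ ^ k + t, ?_, ?_⟩
    · have h1 : (O i).valuation (z₀ ^ k) < 1 := by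
        rw [map_pow]
        exact pow_lt_one₀ (zero_le') hz₀i hk0
      exact lt_of_le_of_lt ((O i).valuation.map_add _ _) (max_lt h1 hti)
    · intro l hl
      rcases Finset.mem_insert.1 hl with rfl | hlS
      · -- l = w
        rcases le_or_gt ((O l).valuation z₀) 1 with hle | hgt
        · have h1 : (O l).valuation (z₀ ^ k) < (O l).valuation t := by
            rw [map_pow]
            calc ((O l).valuation z₀) ^ k ≤ 1 := pow_le_one₀ (zero_le') hle
              _ < (O l).valuation t := htw
          rw [(O l).valuation.map_add_eq_of_lt_right h1]
          exact htw
        · have hne : (O l).valuation (z₀ ^ k) ≠ (O l).valuation t := by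
            rw [map_pow]
            intro h
            exact hk l ⟨hgt, h⟩
          rw [(O l).valuation.map_add_of_distinct_val hne]
          exact lt_max_iff.2 (Or.inr htw)
      · -- l ∈ S
        have hgt := hz₀S l hlS
        have hne : (O l).valuation (z₀ ^ k) ≠ (O l).valuation t := by
          rw [map_pow]
          intro h
          exact hk l ⟨hgt, h⟩
        rw [(O l).valuation.map_add_of_distinct_val hne]
        refine lt_max_iff.2 (Or.inl ?_)
        rw [map_pow]
        exact my_one_lt_pow hgt hk0

/-- Main single-element approximation: for `x ∈ O i` there is `s ≡ 1 mod 𝔪 i`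
with `s` and `s*x` in all the `O l`. -/
private lemma main_s
    (hinc : ∀ i j : Fin m, i ≠ j → ¬((O i : Set K) ⊆ (O j : Set K)))
    (i : Fin m) (x : K) (hx : (O i).valuation x ≤ 1) :
    ∃ s : K, (O i).valuation (s - 1) < 1 ∧
      ∀ l, (O l).valuation s ≤ 1 ∧ (O l).valuation (s * x) ≤ 1 := by
  classical
  rcases eq_or_ne x 0 with rfl | hx0
  · exact ⟨1, by simp, fun l => by simp⟩
  obtain ⟨z, hzi, hzl⟩ := exists_deep O hinc i (Finset.univ.erase i) (by simp)
  have hzl' : ∀ l, l ≠ i → 1 < (O l).valuation z := fun l hl =>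
    hzl l (Finset.mem_erase.2 ⟨hl, Finset.mem_univ l⟩)
  obtain ⟨k, hk0, hk⟩ := exists_avoid
    (fun l k => 1 < (O l).valuation z ∧
      ((O l).valuation z) ^ k * ((O l).valuation x) ^ 2 = 1)
    (by
      intro l k₁ k₂ h₁ h₂
      have hxne : ((O l).valuation x) ^ 2 ≠ 0 :=
        pow_ne_zero _ (((O l).valuation.ne_zero_iff).2 hx0)
      have : ((O l).valuation z) ^ k₁ * ((O l).valuation x) ^ 2
          = ((O l).valuation z) ^ k₂ * ((O l).valuation x) ^ 2 := h₁.2.trans h₂.2.symm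
      exact my_pow_inj h₁.1 (mul_right_cancel₀ hxne this))
  set c : K := z ^ k * x ^ 2 with hc
  have hvc : ∀ l, (O l).valuation c =
      ((O l).valuation z) ^ k * ((O l).valuation x) ^ 2 := by
    intro l; rw [hc, map_mul, map_pow, map_pow]
  have hci : (O i).valuation c < 1 := by
    rw [hvc]
    calc ((O i).valuation z) ^ k * ((O i).valuation x) ^ 2
        ≤ ((O i).valuation z) ^ k * 1 := mul_le_mul_right (pow_le_one₀ (zero_le') hx) _
      _ = ((O i).valuation z) ^ k := mul_one _
      _ < 1 := pow_lt_one₀ (zero_le') hzi hk0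
  have h1ci : (O i).valuation (1 + c) = 1 := (O i).valuation.map_one_add_of_lt hci
  have h1c0 : (1 : K) + c ≠ 0 := by
    intro h
    rw [h, map_zero] at h1ci
    exact zero_ne_one h1ci
  refine ⟨(1 + c)⁻¹, ?_, ?_⟩
  · have heq : (1 + c)⁻¹ - 1 = -c * (1 + c)⁻¹ := by
      field_simp
      ring
    rw [heq, map_mul, (O i).valuation.map_neg, map_inv₀, h1ci, inv_one, mul_one]
    exact hci
  · intro l
    rcases eq_or_ne l i with rfl | hli
    · constructor
      · rw [map_inv₀, h1ci, inv_one]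
      · rw [map_mul, map_inv₀, h1ci, inv_one, one_mul]
        exact hx
    · -- l ≠ i
      have hcne1 : (O l).valuation c ≠ 1 := by
        rw [hvc]
        intro h
        exact hk l ⟨hzl' l hli, h⟩
      have hzk1 : 1 < ((O l).valuation z) ^ k := my_one_lt_pow (hzl' l hli) hk0
      rcases lt_or_gt_of_ne hcne1 with hlt | hgt
      · -- v l c < 1 : s is a unit at l, and necessarily v l x ≤ 1
        have h1c : (O l).valuation (1 + c) = 1 := (O l).valuation.map_one_add_of_lt hlt
        have hxle : (O l).valuation x ≤ 1 := by
          by_contra h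
          push_neg at h
          have hx2 : (1 : (O l).ValueGroup) < ((O l).valuation x) ^ 2 :=
            my_one_lt_pow h (by norm_num)
          have : 1 < (O l).valuation c := by
            rw [hvc]
            calc (1 : (O l).ValueGroup) < ((O l).valuation z) ^ k := hzk1
              _ = ((O l).valuation z) ^ k * 1 := (mul_one _).symm
              _ ≤ ((O l).valuation z) ^ k * ((O l).valuation x) ^ 2 :=
                  mul_le_mul_right hx2.le _
          exact absurd hlt (not_lt.2 this.le)
        constructor
        · rw [map_inv₀, h1c, inv_one]
        · rw [map_mul, map_inv₀, h1c, inv_one, one_mul]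
          exact hxle
      · -- 1 < v l c : s is small at l
        have h1c : (O l).valuation (1 + c) = (O l).valuation c := by
          have : (O l).valuation 1 < (O l).valuation c := by
            rw [map_one]; exact hgt
          exact (O l).valuation.map_add_eq_of_lt_right this
        have hsle : (O l).valuation (1 + c)⁻¹ ≤ 1 := by
          rw [map_inv₀, h1c]
          have hc0 : (O l).valuation c ≠ 0 := by
            intro h; rw [h] at hgt; exact absurd hgt (by simp)
          rw [inv_le_one₀ (zero_lt_iff.2 hc0)]
          exact hgt.le
        refine ⟨hsle, ?_⟩
        rcases le_or_gt ((O l).valuation x) 1 with hxle | hxgt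
        · rw [map_mul]
          calc (O l).valuation (1 + c)⁻¹ * (O l).valuation x
              ≤ 1 * 1 := mul_le_mul' hsle hxle
            _ = 1 := one_mul 1
        · -- 1 < v l x
          have hc0 : (O l).valuation c ≠ 0 := by
            intro h; rw [h] at hgt; exact absurd hgt (by simp)
          rw [map_mul, map_inv₀, h1c, hvc]
          set γ := ((O l).valuation z) ^ k
          set δ := (O l).valuation x
          have hγδ : 1 ≤ γ * δ := by
            calc (1 : (O l).ValueGroup) = 1 * 1 := (one_mul 1).symm
              _ ≤ γ * δ := mul_le_mul' hzk1.le hxgt.le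
          have hdle : δ ≤ γ * δ ^ 2 := by
            calc δ = 1 * δ := (one_mul δ).symm
              _ ≤ (γ * δ) * δ := mul_le_mul_left hγδ δ
              _ = γ * δ ^ 2 := by rw [mul_assoc, ← pow_two]
          have hne0 : γ * δ ^ 2 ≠ 0 := by
            rw [hvc] at hc0
            exact hc0
          calc (γ * δ ^ 2)⁻¹ * δ ≤ (γ * δ ^ 2)⁻¹ * (γ * δ ^ 2) := mul_le_mul_right hdle _
            _ = 1 := inv_mul_cancel₀ hne0

end Aux

/-- Let `O₁, …, Oₘ` be pairwise incomparable valuation subrings of a field `K`, with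
maximal ideals `𝔪₁, …, 𝔪ₘ` (the nonunits), and let `R = O₁ ∩ ⋯ ∩ Oₘ`.  Then for
every subspace `V ≤ K^n` and every index `i`, one has
`(V ∩ R^n) + 𝔪ᵢ^n = (V ∩ Oᵢ^n) + 𝔪ᵢ^n` inside `K^n`. -/
theorem multiValuation_approximation
    {K : Type*} [Field K] (m : ℕ) (O : Fin m → ValuationSubring K)
    (hinc : ∀ i j : Fin m, i ≠ j → ¬((O i : Set K) ⊆ (O j : Set K)))
    (n : ℕ) (V : Submodule K (Fin n → K)) (i : Fin m) :
    {x : Fin n → K | ∃ v ∈ V, (∀ (j : Fin n) (l : Fin m), v j ∈ O l) ∧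
        ∃ w : Fin n → K, (∀ j : Fin n, w j ∈ (O i).nonunits) ∧ x = v + w} =
    {x : Fin n → K | ∃ v ∈ V, (∀ j : Fin n, v j ∈ O i) ∧
        ∃ w : Fin n → K, (∀ j : Fin n, w j ∈ (O i).nonunits) ∧ x = v + w} := by
  classical
  ext x
  simp only [Set.mem_setOf_eq]
  constructor
  · rintro ⟨v, hvV, hvR, w, hw, rfl⟩
    exact ⟨v, hvV, fun j => hvR j i, w, hw, rfl⟩
  · rintro ⟨v, hvV, hvO, w, hw, rfl⟩
    -- choose s j for each coordinate
    have hvx : ∀ j, (O i).valuation (v j) ≤ 1 := fun j =>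
      ((O i).valuation_le_one_iff (v j)).2 (hvO j)
    choose s hs1 hs2 using fun j => main_s O hinc i (v j) (hvx j)
    set S : K := ∏ j, s j with hS
    -- S is in every O l
    have hSle : ∀ l, (O l).valuation S ≤ 1 := by
      intro l
      rw [hS, map_prod]
      exact Finset.prod_le_one (fun j _ => zero_le') (fun j _ => (hs2 j l).1)
    -- S ≡ 1 mod 𝔪 i
    have hS1 : ∀ T : Finset (Fin n), (O i).valuation ((∏ j ∈ T, s j) - 1) < 1 := by
      intro T
      induction T using Finset.induction_on with
      | empty => simp
      | @insert a T haT ih =>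
        rw [Finset.prod_insert haT]
        have heq : s a * (∏ j ∈ T, s j) - 1
            = s a * ((∏ j ∈ T, s j) - 1) + (s a - 1) := by ring
        rw [heq]
        refine lt_of_le_of_lt ((O i).valuation.map_add _ _) (max_lt ?_ (hs1 a))
        rw [map_mul]
        calc (O i).valuation (s a) * (O i).valuation ((∏ j ∈ T, s j) - 1)
            ≤ 1 * (O i).valuation ((∏ j ∈ T, s j) - 1) := mul_le_mul_left ((hs2 a i).1) _
          _ = (O i).valuation ((∏ j ∈ T, s j) - 1) := one_mul _
          _ < 1 := ih
    have hSone : (O i).valuation (S - 1) < 1 := hS1 Finset.univ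
    -- S * v j is in every O l
    have hSv : ∀ j l, (O l).valuation (S * v j) ≤ 1 := by
      intro j l
      have : S = s j * ∏ k ∈ Finset.univ.erase j, s k := by
        rw [hS, ← Finset.mul_prod_erase Finset.univ s (Finset.mem_univ j)]
      rw [this, mul_comm (s j) _, mul_assoc, map_mul]
      calc (O l).valuation (∏ k ∈ Finset.univ.erase j, s k) *
            (O l).valuation (s j * v j)
          ≤ 1 * 1 := by
            refine mul_le_mul' ?_ ((hs2 j l).2)
            rw [map_prod]
            exact Finset.prod_le_one (fun k _ => zero_le') (fun k _ => (hs2 k l).1)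
        _ = 1 := one_mul 1
    refine ⟨S • v, Submodule.smul_mem V S hvV, ?_, (v + w) - S • v, ?_, by abel⟩
    · intro j l
      rw [← (O l).valuation_le_one_iff]
      have : (S • v) j = S * v j := rfl
      rw [this]
      exact hSv j l
    · intro j
      have heq : ((v + w) - S • v) j = (1 - S) * v j + w j := by
        simp [Pi.add_apply, Pi.sub_apply, Pi.smul_apply, smul_eq_mul]
        ring
      rw [ValuationSubring.mem_nonunits_iff, heq]
      refine lt_of_le_of_lt ((O i).valuation.map_add _ _) (max_lt ?_ ?_)
      · rw [map_mul]
        have h1S : (O i).valuation (1 - S) < 1 := by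
          have : (1 : K) - S = -(S - 1) := by ring
          rw [this, (O i).valuation.map_neg]
          exact hSone
        calc (O i).valuation (1 - S) * (O i).valuation (v j)
            ≤ (O i).valuation (1 - S) * 1 := mul_le_mul_right (hvx j) _
          _ = (O i).valuation (1 - S) := mul_one _
          _ < 1 := h1S
      · exact (O i).mem_nonunits_iff.1 (hw j)
end
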